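/- arXiv:2106.06552 — 4 statements merged into one kernel-verified Lean document; each statement's English description precedes it below -/
import Mathlib

section
/- For every triple of functions a : {-1,1}² → [-1,1], b : {-1,1}² → [-1,1], c : {-1,1}² → [-1,1], the sum over all (x₁,x₂,x₃) ∈ {-1,1}³ of Q_G(x₁,x₂,x₃) · a(x₁,x₃) · b(x₁,x₂) · c(x₂,x₃) is at most 6, where Q_G(x₁,x₂,x₃) = 1 - (1-x₁)(1-x₂)(1-x₃)/4. Moreover the bound 6 is attained by some choice of a, b, c with values in {-1,1}. -/
lemma mulLeAbs (t c : ℝ) (h1 : -1 ≤ c) (h2 : c ≤ 1) : t * c ≤ |t| := by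
  rcases abs_cases t with ⟨h, _⟩ | ⟨h, _⟩ <;> nlinarith

lemma key (a1 a2 a3 a4 b1 b2 b3 b4 c1 c2 c3 c4 : ℝ)
    (ha1 : |a1| ≤ 1) (ha2 : |a2| ≤ 1) (ha3 : |a3| ≤ 1) (ha4 : |a4| ≤ 1)
    (hb1 : |b1| ≤ 1) (hb2 : |b2| ≤ 1) (hb3 : |b3| ≤ 1) (hb4 : |b4| ≤ 1)
    (hc1 : |c1| ≤ 1) (hc2 : |c2| ≤ 1) (hc3 : |c3| ≤ 1) (hc4 : |c4| ≤ 1) :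
    -(a1*b1*c1) + a2*b1*c2 + a1*b2*c3 + a2*b2*c4
      + a3*b3*c1 + a4*b3*c2 + a3*b4*c3 + a4*b4*c4 ≤ 6 := by
  obtain ⟨ha1l, ha1r⟩ := abs_le.mp ha1
  obtain ⟨ha2l, ha2r⟩ := abs_le.mp ha2
  obtain ⟨ha3l, ha3r⟩ := abs_le.mp ha3
  obtain ⟨ha4l, ha4r⟩ := abs_le.mp ha4
  obtain ⟨hb1l, hb1r⟩ := abs_le.mp hb1
  obtain ⟨hb2l, hb2r⟩ := abs_le.mp hb2
  obtain ⟨hb3l, hb3r⟩ := abs_le.mp hb3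
  obtain ⟨hb4l, hb4r⟩ := abs_le.mp hb4
  obtain ⟨hc1l, hc1r⟩ := abs_le.mp hc1
  obtain ⟨hc2l, hc2r⟩ := abs_le.mp hc2
  obtain ⟨hc3l, hc3r⟩ := abs_le.mp hc3
  obtain ⟨hc4l, hc4r⟩ := abs_le.mp hc4
  set X := b2*c3 - b1*c1 with hX
  set Y := b1*c2 + b2*c4 with hY
  set Z := b3*c1 + b4*c3 with hZ
  set W := b3*c2 + b4*c4 with hW
  -- bound S by |X|+|Y|+|Z|+|W|
  have sX : X * a1 ≤ |X| := mulLeAbs _ _ ha1l ha1r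
  have sY : Y * a2 ≤ |Y| := mulLeAbs _ _ ha2l ha2r
  have sZ : Z * a3 ≤ |Z| := mulLeAbs _ _ ha3l ha3r
  have sW : W * a4 ≤ |W| := mulLeAbs _ _ ha4l ha4r
  have hSsum : -(a1*b1*c1) + a2*b1*c2 + a1*b2*c3 + a2*b2*c4
      + a3*b3*c1 + a4*b3*c2 + a3*b4*c3 + a4*b4*c4
      = X * a1 + Y * a2 + Z * a3 + W * a4 := by rw [hX, hY, hZ, hW]; ring
  -- abbreviations
  set m := |b1 - b3| with hm'
  set p := |b1 + b3| with hp'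
  set M := |b2 - b4| with hM'
  set P := |b2 + b4| with hP'
  -- sign-combination estimates
  have e1 : X + Z ≤ m + P := by
    have h1 := mulLeAbs (b3 - b1) c1 hc1l hc1r
    have h2 := mulLeAbs (b2 + b4) c3 hc3l hc3r
    rw [abs_sub_comm b3 b1] at h1
    calc X + Z = (b3 - b1) * c1 + (b2 + b4) * c3 := by rw [hX, hZ]; ring
      _ ≤ m + P := by rw [hm', hP']; exact add_le_add h1 h2
  have e2 : X - Z ≤ p + M := by
    have h1 := mulLeAbs (-b3 - b1) c1 hc1l hc1r
    have h2 := mulLeAbs (b2 - b4) c3 hc3l hc3r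
    have : |(-b3 - b1)| = p := by rw [hp']; rw [show -b3 - b1 = -(b1 + b3) by ring, abs_neg]
    rw [this] at h1
    calc X - Z = (-b3 - b1) * c1 + (b2 - b4) * c3 := by rw [hX, hZ]; ring
      _ ≤ p + M := by rw [hM']; exact add_le_add h1 h2
  have e3 : -X + Z ≤ p + M := by
    have h1 := mulLeAbs (b3 + b1) c1 hc1l hc1r
    have h2 := mulLeAbs (b4 - b2) c3 hc3l hc3r
    have t1 : |(b3 + b1)| = p := by rw [hp', add_comm b3 b1]
    have t2 : |(b4 - b2)| = M := by rw [hM', abs_sub_comm]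
    rw [t1] at h1; rw [t2] at h2
    calc -X + Z = (b3 + b1) * c1 + (b4 - b2) * c3 := by rw [hX, hZ]; ring
      _ ≤ p + M := add_le_add h1 h2
  have e4 : -X - Z ≤ m + P := by
    have h1 := mulLeAbs (b1 - b3) c1 hc1l hc1r
    have h2 := mulLeAbs (-b2 - b4) c3 hc3l hc3r
    have t2 : |(-b2 - b4)| = P := by rw [hP', show -b2 - b4 = -(b2 + b4) by ring, abs_neg]
    rw [t2] at h2
    calc -X - Z = (b1 - b3) * c1 + (-b2 - b4) * c3 := by rw [hX, hZ]; ring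
      _ ≤ m + P := add_le_add h1 h2
  have f1 : Y + W ≤ p + P := by
    have h1 := mulLeAbs (b1 + b3) c2 hc2l hc2r
    have h2 := mulLeAbs (b2 + b4) c4 hc4l hc4r
    calc Y + W = (b1 + b3) * c2 + (b2 + b4) * c4 := by rw [hY, hW]; ring
      _ ≤ p + P := add_le_add h1 h2
  have f2 : Y - W ≤ m + M := by
    have h1 := mulLeAbs (b1 - b3) c2 hc2l hc2r
    have h2 := mulLeAbs (b2 - b4) c4 hc4l hc4r
    calc Y - W = (b1 - b3) * c2 + (b2 - b4) * c4 := by rw [hY, hW]; ring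
      _ ≤ m + M := add_le_add h1 h2
  have f3 : -Y + W ≤ m + M := by
    have h1 := mulLeAbs (b3 - b1) c2 hc2l hc2r
    have h2 := mulLeAbs (b4 - b2) c4 hc4l hc4r
    rw [abs_sub_comm b3 b1] at h1; rw [abs_sub_comm b4 b2] at h2
    calc -Y + W = (b3 - b1) * c2 + (b4 - b2) * c4 := by rw [hY, hW]; ring
      _ ≤ m + M := add_le_add h1 h2
  have f4 : -Y - W ≤ p + P := by
    have h1 := mulLeAbs (-(b1 + b3)) c2 hc2l hc2r
    have h2 := mulLeAbs (-(b2 + b4)) c4 hc4l hc4r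
    rw [abs_neg] at h1; rw [abs_neg] at h2
    calc -Y - W = (-(b1 + b3)) * c2 + (-(b2 + b4)) * c4 := by rw [hY, hW]; ring
      _ ≤ p + P := add_le_add h1 h2
  -- auxiliary norm facts
  have g1 : m + p ≤ 2 := by
    rw [hm', hp']
    rcases abs_cases (b1 - b3) with ⟨h, _⟩ | ⟨h, _⟩ <;>
      rcases abs_cases (b1 + b3) with ⟨h', _⟩ | ⟨h', _⟩ <;> linarith
  have g2 : M + P ≤ 2 := by
    rw [hM', hP']
    rcases abs_cases (b2 - b4) with ⟨h, _⟩ | ⟨h, _⟩ <;>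
      rcases abs_cases (b2 + b4) with ⟨h', _⟩ | ⟨h', _⟩ <;> linarith
  have gm : m ≤ 2 := by rw [hm']; rcases abs_cases (b1 - b3) with ⟨h, _⟩ | ⟨h, _⟩ <;> linarith
  have gp : p ≤ 2 := by rw [hp']; rcases abs_cases (b1 + b3) with ⟨h, _⟩ | ⟨h, _⟩ <;> linarith
  have gM : M ≤ 2 := by rw [hM']; rcases abs_cases (b2 - b4) with ⟨h, _⟩ | ⟨h, _⟩ <;> linarith
  have gP : P ≤ 2 := by rw [hP']; rcases abs_cases (b2 + b4) with ⟨h, _⟩ | ⟨h, _⟩ <;> linarith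
  -- |X| + |Z| ≤ max (m+P) (p+M), |Y|+|W| ≤ max (p+P) (m+M)
  have hXZ : |X| + |Z| ≤ max (m + P) (p + M) := by
    rcases abs_cases X with ⟨hx, _⟩ | ⟨hx, _⟩ <;> rcases abs_cases Z with ⟨hz, _⟩ | ⟨hz, _⟩ <;>
      rw [hx, hz]
    · exact le_trans e1 (le_max_left _ _)
    · exact le_trans (by linarith [e2] : X + -Z ≤ p + M) (le_max_right _ _)
    · exact le_trans (by linarith [e3] : -X + Z ≤ p + M) (le_max_right _ _)
    · exact le_trans (by linarith [e4] : -X + -Z ≤ m + P) (le_max_left _ _)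
  have hYW : |Y| + |W| ≤ max (p + P) (m + M) := by
    rcases abs_cases Y with ⟨hy, _⟩ | ⟨hy, _⟩ <;> rcases abs_cases W with ⟨hw, _⟩ | ⟨hw, _⟩ <;>
      rw [hy, hw]
    · exact le_trans f1 (le_max_left _ _)
    · exact le_trans (by linarith [f2] : Y + -W ≤ m + M) (le_max_right _ _)
    · exact le_trans (by linarith [f3] : -Y + W ≤ m + M) (le_max_right _ _)
    · exact le_trans (by linarith [f4] : -Y + -W ≤ p + P) (le_max_left _ _)
  rw [hSsum]
  have final : max (m + P) (p + M) + max (p + P) (m + M) ≤ 6 := by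
    rcases max_choice (m + P) (p + M) with h | h <;> rcases max_choice (p + P) (m + M) with h' | h' <;>
      rw [h, h'] <;> linarith
  linarith [sX, sY, sZ, sW, hXZ, hYW]

noncomputable def QG (x₁ x₂ x₃ : ℝ) : ℝ := 1 - (1 - x₁) * (1 - x₂) * (1 - x₃) / 4

theorem stmt_2 :
    (∀ a b c : ℝ → ℝ → ℝ,
      (∀ u ∈ ({-1, 1} : Finset ℝ), ∀ v ∈ ({-1, 1} : Finset ℝ), |a u v| ≤ 1) →
      (∀ u ∈ ({-1, 1} : Finset ℝ), ∀ v ∈ ({-1, 1} : Finset ℝ), |b u v| ≤ 1) →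
      (∀ u ∈ ({-1, 1} : Finset ℝ), ∀ v ∈ ({-1, 1} : Finset ℝ), |c u v| ≤ 1) →
      ∑ x₁ ∈ ({-1, 1} : Finset ℝ), ∑ x₂ ∈ ({-1, 1} : Finset ℝ), ∑ x₃ ∈ ({-1, 1} : Finset ℝ),
        QG x₁ x₂ x₃ * a x₁ x₃ * b x₁ x₂ * c x₂ x₃ ≤ 6) ∧
    (∃ a b c : ℝ → ℝ → ℝ,
      (∀ u ∈ ({-1, 1} : Finset ℝ), ∀ v ∈ ({-1, 1} : Finset ℝ), a u v = 1 ∨ a u v = -1) ∧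
      (∀ u ∈ ({-1, 1} : Finset ℝ), ∀ v ∈ ({-1, 1} : Finset ℝ), b u v = 1 ∨ b u v = -1) ∧
      (∀ u ∈ ({-1, 1} : Finset ℝ), ∀ v ∈ ({-1, 1} : Finset ℝ), c u v = 1 ∨ c u v = -1) ∧
      ∑ x₁ ∈ ({-1, 1} : Finset ℝ), ∑ x₂ ∈ ({-1, 1} : Finset ℝ), ∑ x₃ ∈ ({-1, 1} : Finset ℝ),
        QG x₁ x₂ x₃ * a x₁ x₃ * b x₁ x₂ * c x₂ x₃ = 6) := by
  constructor
  · intro a b c ha hb hc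
    have m1 : (-1 : ℝ) ∈ ({-1, 1} : Finset ℝ) := by norm_num
    have m2 : (1 : ℝ) ∈ ({-1, 1} : Finset ℝ) := by norm_num
    have K := key (a (-1) (-1)) (a (-1) 1) (a 1 (-1)) (a 1 1)
      (b (-1) (-1)) (b (-1) 1) (b 1 (-1)) (b 1 1)
      (c (-1) (-1)) (c (-1) 1) (c 1 (-1)) (c 1 1)
      (ha _ m1 _ m1) (ha _ m1 _ m2) (ha _ m2 _ m1) (ha _ m2 _ m2)
      (hb _ m1 _ m1) (hb _ m1 _ m2) (hb _ m2 _ m1) (hb _ m2 _ m2)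
      (hc _ m1 _ m1) (hc _ m1 _ m2) (hc _ m2 _ m1) (hc _ m2 _ m2)
    norm_num [Finset.sum_insert, Finset.sum_singleton, QG]
    linarith [K]
  · refine ⟨fun _ _ => 1, fun _ _ => 1, fun _ _ => 1, ?_, ?_, ?_, ?_⟩
    · intro u _ v _; exact Or.inl rfl
    · intro u _ v _; exact Or.inl rfl
    · intro u _ v _; exact Or.inl rfl
    · norm_num [Finset.sum_insert, Finset.sum_singleton, QG]
end

section
/- Let q be the uniform distribution on {-1,1}³ and consider target function f(x,y) = y₁y₂y₃·Q_G(x₁,x₂,x₃) with Q_G(x) = 1 - (1-x₁)(1-x₂)(1-x₃)/4. Suppose party 1 outputs a deterministic guess G₁ that is an arbitrary {-1,1}-valued function of (x₁, y₁, x₃, m₂, m₃), where m₂ is an arbitrary {-1,1}-valued function of (x₂, y₂, x₁) and m₃ is an arbitrary {-1,1}-valued function of (x₃, y₃, x₂). Then the probability over uniformly random (x₁,x₂,x₃,y₁,y₂,y₃) ∈ {-1,1}⁶ that G₁ = f is at most 7/8. -/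
notation "pm" => ({-1, 1} : Finset ℝ)

/-- embedding of booleans as signs -/
def ι (b : Bool) : ℝ := if b then 1 else -1

/-- Bool version of the target `y₁y₂y₃ · Q_G(x)` -/
def tb (a₁ a₂ a₃ b₁ b₂ b₃ : Bool) : Bool := (b₁ == b₂) == (b₃ == (a₁ || a₂ || a₃))

/-- per-triple success count -/
def S (g p r : Bool → Bool → Bool) (t : Bool → Bool → Bool → Bool) : ℕ :=
  (if g (p false false) (r false false) = t false false false then 1 else 0) +
  (if g (p false false) (r false true) = t false false true then 1 else 0) +
  (if g (p false true) (r false false) = t false true false then 1 else 0) +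
  (if g (p false true) (r false true) = t false true true then 1 else 0) +
  (if g (p true false) (r true false) = t true false false then 1 else 0) +
  (if g (p true false) (r true true) = t true false true then 1 else 0) +
  (if g (p true true) (r true false) = t true true false then 1 else 0) +
  (if g (p true true) (r true true) = t true true true then 1 else 0)

def tbs (a₁ a₃ b₁ : Bool) : Bool → Bool → Bool → Bool := fun a₂ b₂ b₃ => tb a₁ a₂ a₃ b₁ b₂ b₃

lemma pick (x : ℝ) (hx : x = 1 ∨ x = -1) : x = ι (if x = 1 then true else false) := by
  rcases hx with rfl | rfl <;> norm_num [ι]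

lemma ite01_le (c : Prop) [Decidable c] : (if c then (1:ℕ) else 0) ≤ 1 := by
  split <;> omega

lemma S_le8 (g p r : Bool → Bool → Bool) (t : Bool → Bool → Bool → Bool) : S g p r t ≤ 8 := by
  unfold S
  have h1 := ite01_le (g (p false false) (r false false) = t false false false)
  have h2 := ite01_le (g (p false false) (r false true) = t false false true)
  have h3 := ite01_le (g (p false true) (r false false) = t false true false)
  have h4 := ite01_le (g (p false true) (r false true) = t false true true)
  have h5 := ite01_le (g (p true false) (r true false) = t true false false)
  have h6 := ite01_le (g (p true false) (r true true) = t true false true)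
  have h7 := ite01_le (g (p true true) (r true false) = t true true false)
  have h8 := ite01_le (g (p true true) (r true true) = t true true true)
  omega

lemma pair_le (x t₁ t₂ : Bool) (h : t₁ ≠ t₂) :
    (if x = t₁ then (1:ℕ) else 0) + (if x = t₂ then 1 else 0) ≤ 1 := by
  revert h; revert x t₁ t₂; decide

lemma tbne₂ (a₁ a₂ a₃ b₁ b₃ : Bool) : tb a₁ a₂ a₃ b₁ false b₃ ≠ tb a₁ a₂ a₃ b₁ true b₃ := by
  revert a₁ a₂ a₃ b₁ b₃; decide

lemma tbne₃ (a₁ a₂ a₃ b₁ b₂ : Bool) : tb a₁ a₂ a₃ b₁ b₂ false ≠ tb a₁ a₂ a₃ b₁ b₂ true := by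
  revert a₁ a₂ a₃ b₁ b₂; decide

/-- Case 1: party 2's message ignores y₂ for some (x₂,x₁). -/
lemma L1f (g p r : Bool → Bool → Bool) (a₁ a₃ b₁ a₂' : Bool)
    (h : p a₂' true = p a₂' false) : S g p r (tbs a₁ a₃ b₁) ≤ 6 := by
  unfold S tbs
  cases a₂' <;> rw [h] <;>
  [ (have h1 := pair_le (g (p false false) (r false false))
        (tb a₁ false a₃ b₁ false false) (tb a₁ false a₃ b₁ true false) (tbne₂ a₁ false a₃ b₁ false);
     have h2 := pair_le (g (p false false) (r false true))
        (tb a₁ false a₃ b₁ false true) (tb a₁ false a₃ b₁ true true) (tbne₂ a₁ false a₃ b₁ true);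
     have h3 := ite01_le (g (p true false) (r true false) = tb a₁ true a₃ b₁ false false);
     have h4 := ite01_le (g (p true false) (r true true) = tb a₁ true a₃ b₁ false true);
     have h5 := ite01_le (g (p true true) (r true false) = tb a₁ true a₃ b₁ true false);
     have h6 := ite01_le (g (p true true) (r true true) = tb a₁ true a₃ b₁ true true);
     omega);
    (have h1 := pair_le (g (p true false) (r true false))
        (tb a₁ true a₃ b₁ false false) (tb a₁ true a₃ b₁ true false) (tbne₂ a₁ true a₃ b₁ false);
     have h2 := pair_le (g (p true false) (r true true))
        (tb a₁ true a₃ b₁ false true) (tb a₁ true a₃ b₁ true true) (tbne₂ a₁ true a₃ b₁ true);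
     have h3 := ite01_le (g (p false false) (r false false) = tb a₁ false a₃ b₁ false false);
     have h4 := ite01_le (g (p false false) (r false true) = tb a₁ false a₃ b₁ false true);
     have h5 := ite01_le (g (p false true) (r false false) = tb a₁ false a₃ b₁ true false);
     have h6 := ite01_le (g (p false true) (r false true) = tb a₁ false a₃ b₁ true true);
     omega) ]

/-- Case 2: party 3's message ignores y₃ for some (x₃,x₂). -/
lemma L2f (g p r : Bool → Bool → Bool) (a₁ a₃ b₁ a₂' : Bool)
    (h : r a₂' true = r a₂' false) : S g p r (tbs a₁ a₃ b₁) ≤ 6 := by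
  unfold S tbs
  cases a₂' <;> rw [h] <;>
  [ (have h1 := pair_le (g (p false false) (r false false))
        (tb a₁ false a₃ b₁ false false) (tb a₁ false a₃ b₁ false true) (tbne₃ a₁ false a₃ b₁ false);
     have h2 := pair_le (g (p false true) (r false false))
        (tb a₁ false a₃ b₁ true false) (tb a₁ false a₃ b₁ true true) (tbne₃ a₁ false a₃ b₁ true);
     have h3 := ite01_le (g (p true false) (r true false) = tb a₁ true a₃ b₁ false false);
     have h4 := ite01_le (g (p true false) (r true true) = tb a₁ true a₃ b₁ false true);
     have h5 := ite01_le (g (p true true) (r true false) = tb a₁ true a₃ b₁ true false);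
     have h6 := ite01_le (g (p true true) (r true true) = tb a₁ true a₃ b₁ true true);
     omega);
    (have h1 := pair_le (g (p true false) (r true false))
        (tb a₁ true a₃ b₁ false false) (tb a₁ true a₃ b₁ false true) (tbne₃ a₁ true a₃ b₁ false);
     have h2 := pair_le (g (p true true) (r true false))
        (tb a₁ true a₃ b₁ true false) (tb a₁ true a₃ b₁ true true) (tbne₃ a₁ true a₃ b₁ true);
     have h3 := ite01_le (g (p false false) (r false false) = tb a₁ false a₃ b₁ false false);
     have h4 := ite01_le (g (p false false) (r false true) = tb a₁ false a₃ b₁ false true);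
     have h5 := ite01_le (g (p false true) (r false false) = tb a₁ false a₃ b₁ true false);
     have h6 := ite01_le (g (p false true) (r false true) = tb a₁ false a₃ b₁ true true);
     omega) ]

set_option maxHeartbeats 1000000 in
lemma L3bf : ∀ (g : Bool → Bool → Bool) (pe re : Bool → Bool) (a₁ a₃ b₁ : Bool),
    ((pe false == re false) == (a₁ || a₃)) ≠ (pe true == re true) →
    S g (fun a b => b == pe a) (fun a b => b == re a) (tbs a₁ a₃ b₁) ≤ 4 := by decide

lemma L3a' : ∀ (P R : Bool → Bool → Bool), ∃ a₁ a₃,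
    ((P false a₁ == R a₃ false) == (a₁ || a₃)) ≠ (P true a₁ == R a₃ true) := by decide

lemma eq_beq_form (p : Bool → Bool → Bool) (h : ∀ a, p a true ≠ p a false) :
    p = fun a b => b == p a true := by
  funext a b
  have := h a
  cases b <;> revert this <;> cases hpt : p a true <;> cases hpf : p a false <;> simp

/-- Case 3 bound. -/
lemma L3f (g p r : Bool → Bool → Bool) (a₁ a₃ b₁ : Bool)
    (hp : ∀ a, p a true ≠ p a false) (hr : ∀ a, r a true ≠ r a false)
    (hc : ((p false true == r false true) == (a₁ || a₃)) ≠ (p true true == r true true)) :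
    S g p r (tbs a₁ a₃ b₁) ≤ 4 := by
  have hp' := eq_beq_form p hp
  have hr' := eq_beq_form r hr
  rw [hp', hr']
  exact L3bf g (fun a => p a true) (fun a => r a true) a₁ a₃ b₁ hc

theorem main (BG : Bool → Bool → Bool → Bool → Bool → Bool) (B₂ B₃ : Bool → Bool → Bool → Bool) :
    (∑ a₁ : Bool, ∑ a₂ : Bool, ∑ a₃ : Bool, ∑ b₁ : Bool, ∑ b₂ : Bool, ∑ b₃ : Bool,
      if BG a₁ b₁ a₃ (B₂ a₂ b₂ a₁) (B₃ a₃ b₃ a₂) = tb a₁ a₂ a₃ b₁ b₂ b₃ then (1:ℕ) else 0)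
      ≤ 56 := by
  have e : (∑ a₁ : Bool, ∑ a₂ : Bool, ∑ a₃ : Bool, ∑ b₁ : Bool, ∑ b₂ : Bool, ∑ b₃ : Bool,
      if BG a₁ b₁ a₃ (B₂ a₂ b₂ a₁) (B₃ a₃ b₃ a₂) = tb a₁ a₂ a₃ b₁ b₂ b₃ then (1:ℕ) else 0) =
      S (BG false false false) (fun a₂ b₂ => B₂ a₂ b₂ false) (fun a₂ b₃ => B₃ false b₃ a₂) (tbs false false false) +
      S (BG false false true) (fun a₂ b₂ => B₂ a₂ b₂ false) (fun a₂ b₃ => B₃ true b₃ a₂) (tbs false true false) +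
      S (BG false true false) (fun a₂ b₂ => B₂ a₂ b₂ false) (fun a₂ b₃ => B₃ false b₃ a₂) (tbs false false true) +
      S (BG false true true) (fun a₂ b₂ => B₂ a₂ b₂ false) (fun a₂ b₃ => B₃ true b₃ a₂) (tbs false true true) +
      S (BG true false false) (fun a₂ b₂ => B₂ a₂ b₂ true) (fun a₂ b₃ => B₃ false b₃ a₂) (tbs true false false) +
      S (BG true false true) (fun a₂ b₂ => B₂ a₂ b₂ true) (fun a₂ b₃ => B₃ true b₃ a₂) (tbs true true false) +
      S (BG true true false) (fun a₂ b₂ => B₂ a₂ b₂ true) (fun a₂ b₃ => B₃ false b₃ a₂) (tbs true false true) +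
      S (BG true true true) (fun a₂ b₂ => B₂ a₂ b₂ true) (fun a₂ b₃ => B₃ true b₃ a₂) (tbs true true true) := by
    simp only [S, tbs, Fintype.sum_bool]
    ring!
  rw [e]
  by_cases h2 : ∃ a₁ a₂, B₂ a₂ true a₁ = B₂ a₂ false a₁
  · obtain ⟨a₁', a₂', h⟩ := h2
    cases a₁'
    · have b1 := L1f (BG false false false) (fun a₂ b₂ => B₂ a₂ b₂ false) (fun a₂ b₃ => B₃ false b₃ a₂) false false false a₂' h
      have b2 := L1f (BG false false true) (fun a₂ b₂ => B₂ a₂ b₂ false) (fun a₂ b₃ => B₃ true b₃ a₂) false true false a₂' h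
      have b3 := L1f (BG false true false) (fun a₂ b₂ => B₂ a₂ b₂ false) (fun a₂ b₃ => B₃ false b₃ a₂) false false true a₂' h
      have b4 := L1f (BG false true true) (fun a₂ b₂ => B₂ a₂ b₂ false) (fun a₂ b₃ => B₃ true b₃ a₂) false true true a₂' h
      have c1 := S_le8 (BG true false false) (fun a₂ b₂ => B₂ a₂ b₂ true) (fun a₂ b₃ => B₃ false b₃ a₂) (tbs true false false)
      have c2 := S_le8 (BG true false true) (fun a₂ b₂ => B₂ a₂ b₂ true) (fun a₂ b₃ => B₃ true b₃ a₂) (tbs true true false)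
      have c3 := S_le8 (BG true true false) (fun a₂ b₂ => B₂ a₂ b₂ true) (fun a₂ b₃ => B₃ false b₃ a₂) (tbs true false true)
      have c4 := S_le8 (BG true true true) (fun a₂ b₂ => B₂ a₂ b₂ true) (fun a₂ b₃ => B₃ true b₃ a₂) (tbs true true true)
      omega
    · have b1 := L1f (BG true false false) (fun a₂ b₂ => B₂ a₂ b₂ true) (fun a₂ b₃ => B₃ false b₃ a₂) true false false a₂' h
      have b2 := L1f (BG true false true) (fun a₂ b₂ => B₂ a₂ b₂ true) (fun a₂ b₃ => B₃ true b₃ a₂) true true false a₂' h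
      have b3 := L1f (BG true true false) (fun a₂ b₂ => B₂ a₂ b₂ true) (fun a₂ b₃ => B₃ false b₃ a₂) true false true a₂' h
      have b4 := L1f (BG true true true) (fun a₂ b₂ => B₂ a₂ b₂ true) (fun a₂ b₃ => B₃ true b₃ a₂) true true true a₂' h
      have c1 := S_le8 (BG false false false) (fun a₂ b₂ => B₂ a₂ b₂ false) (fun a₂ b₃ => B₃ false b₃ a₂) (tbs false false false)
      have c2 := S_le8 (BG false false true) (fun a₂ b₂ => B₂ a₂ b₂ false) (fun a₂ b₃ => B₃ true b₃ a₂) (tbs false true false)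
      have c3 := S_le8 (BG false true false) (fun a₂ b₂ => B₂ a₂ b₂ false) (fun a₂ b₃ => B₃ false b₃ a₂) (tbs false false true)
      have c4 := S_le8 (BG false true true) (fun a₂ b₂ => B₂ a₂ b₂ false) (fun a₂ b₃ => B₃ true b₃ a₂) (tbs false true true)
      omega
  · by_cases h3 : ∃ a₃ a₂, B₃ a₃ true a₂ = B₃ a₃ false a₂
    · obtain ⟨a₃', a₂', h⟩ := h3
      cases a₃'
      · have b1 := L2f (BG false false false) (fun a₂ b₂ => B₂ a₂ b₂ false) (fun a₂ b₃ => B₃ false b₃ a₂) false false false a₂' h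
        have b2 := L2f (BG false true false) (fun a₂ b₂ => B₂ a₂ b₂ false) (fun a₂ b₃ => B₃ false b₃ a₂) false false true a₂' h
        have b3 := L2f (BG true false false) (fun a₂ b₂ => B₂ a₂ b₂ true) (fun a₂ b₃ => B₃ false b₃ a₂) true false false a₂' h
        have b4 := L2f (BG true true false) (fun a₂ b₂ => B₂ a₂ b₂ true) (fun a₂ b₃ => B₃ false b₃ a₂) true false true a₂' h
        have c1 := S_le8 (BG false false true) (fun a₂ b₂ => B₂ a₂ b₂ false) (fun a₂ b₃ => B₃ true b₃ a₂) (tbs false true false)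
        have c2 := S_le8 (BG false true true) (fun a₂ b₂ => B₂ a₂ b₂ false) (fun a₂ b₃ => B₃ true b₃ a₂) (tbs false true true)
        have c3 := S_le8 (BG true false true) (fun a₂ b₂ => B₂ a₂ b₂ true) (fun a₂ b₃ => B₃ true b₃ a₂) (tbs true true false)
        have c4 := S_le8 (BG true true true) (fun a₂ b₂ => B₂ a₂ b₂ true) (fun a₂ b₃ => B₃ true b₃ a₂) (tbs true true true)
        omega
      · have b1 := L2f (BG false false true) (fun a₂ b₂ => B₂ a₂ b₂ false) (fun a₂ b₃ => B₃ true b₃ a₂) false true false a₂' h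
        have b2 := L2f (BG false true true) (fun a₂ b₂ => B₂ a₂ b₂ false) (fun a₂ b₃ => B₃ true b₃ a₂) false true true a₂' h
        have b3 := L2f (BG true false true) (fun a₂ b₂ => B₂ a₂ b₂ true) (fun a₂ b₃ => B₃ true b₃ a₂) true true false a₂' h
        have b4 := L2f (BG true true true) (fun a₂ b₂ => B₂ a₂ b₂ true) (fun a₂ b₃ => B₃ true b₃ a₂) true true true a₂' h
        have c1 := S_le8 (BG false false false) (fun a₂ b₂ => B₂ a₂ b₂ false) (fun a₂ b₃ => B₃ false b₃ a₂) (tbs false false false)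
        have c2 := S_le8 (BG false true false) (fun a₂ b₂ => B₂ a₂ b₂ false) (fun a₂ b₃ => B₃ false b₃ a₂) (tbs false false true)
        have c3 := S_le8 (BG true false false) (fun a₂ b₂ => B₂ a₂ b₂ true) (fun a₂ b₃ => B₃ false b₃ a₂) (tbs true false false)
        have c4 := S_le8 (BG true true false) (fun a₂ b₂ => B₂ a₂ b₂ true) (fun a₂ b₃ => B₃ false b₃ a₂) (tbs true false true)
        omega
    · push_neg at h2 h3
      obtain ⟨a₁', a₃', hc⟩ := L3a' (fun a₂ a₁ => B₂ a₂ true a₁) (fun a₃ a₂ => B₃ a₃ true a₂)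
      have hp : ∀ a₁' , ∀ a, B₂ a true a₁' ≠ B₂ a false a₁' := fun a₁' a => h2 a₁' a
      have hr : ∀ a₃', ∀ a, B₃ a₃' true a ≠ B₃ a₃' false a := fun a₃' a => h3 a₃' a
      have c1 := S_le8 (BG false false false) (fun a₂ b₂ => B₂ a₂ b₂ false) (fun a₂ b₃ => B₃ false b₃ a₂) (tbs false false false)
      have c2 := S_le8 (BG false false true) (fun a₂ b₂ => B₂ a₂ b₂ false) (fun a₂ b₃ => B₃ true b₃ a₂) (tbs false true false)
      have c3 := S_le8 (BG false true false) (fun a₂ b₂ => B₂ a₂ b₂ false) (fun a₂ b₃ => B₃ false b₃ a₂) (tbs false false true)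
      have c4 := S_le8 (BG false true true) (fun a₂ b₂ => B₂ a₂ b₂ false) (fun a₂ b₃ => B₃ true b₃ a₂) (tbs false true true)
      have c5 := S_le8 (BG true false false) (fun a₂ b₂ => B₂ a₂ b₂ true) (fun a₂ b₃ => B₃ false b₃ a₂) (tbs true false false)
      have c6 := S_le8 (BG true false true) (fun a₂ b₂ => B₂ a₂ b₂ true) (fun a₂ b₃ => B₃ true b₃ a₂) (tbs true true false)
      have c7 := S_le8 (BG true true false) (fun a₂ b₂ => B₂ a₂ b₂ true) (fun a₂ b₃ => B₃ false b₃ a₂) (tbs true false true)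
      have c8 := S_le8 (BG true true true) (fun a₂ b₂ => B₂ a₂ b₂ true) (fun a₂ b₃ => B₃ true b₃ a₂) (tbs true true true)
      cases a₁' <;> cases a₃'
      · have b1 := L3f (BG false false false) (fun a₂ b₂ => B₂ a₂ b₂ false) (fun a₂ b₃ => B₃ false b₃ a₂) false false false (hp false) (hr false) hc
        have b2 := L3f (BG false true false) (fun a₂ b₂ => B₂ a₂ b₂ false) (fun a₂ b₃ => B₃ false b₃ a₂) false false true (hp false) (hr false) hc
        omega
      · have b1 := L3f (BG false false true) (fun a₂ b₂ => B₂ a₂ b₂ false) (fun a₂ b₃ => B₃ true b₃ a₂) false true false (hp false) (hr true) hc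
        have b2 := L3f (BG false true true) (fun a₂ b₂ => B₂ a₂ b₂ false) (fun a₂ b₃ => B₃ true b₃ a₂) false true true (hp false) (hr true) hc
        omega
      · have b1 := L3f (BG true false false) (fun a₂ b₂ => B₂ a₂ b₂ true) (fun a₂ b₃ => B₃ false b₃ a₂) true false false (hp true) (hr false) hc
        have b2 := L3f (BG true true false) (fun a₂ b₂ => B₂ a₂ b₂ true) (fun a₂ b₃ => B₃ false b₃ a₂) true false true (hp true) (hr false) hc
        omega
      · have b1 := L3f (BG true false true) (fun a₂ b₂ => B₂ a₂ b₂ true) (fun a₂ b₃ => B₃ true b₃ a₂) true true false (hp true) (hr true) hc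
        have b2 := L3f (BG true true true) (fun a₂ b₂ => B₂ a₂ b₂ true) (fun a₂ b₃ => B₃ true b₃ a₂) true true true (hp true) (hr true) hc
        omega

theorem stmt_10 (G₁ : ℝ → ℝ → ℝ → ℝ → ℝ → ℝ) (m₂ m₃ : ℝ → ℝ → ℝ → ℝ)
    (hm₂ : ∀ x₂ ∈ pm, ∀ y₂ ∈ pm, ∀ x₁ ∈ pm, m₂ x₂ y₂ x₁ = 1 ∨ m₂ x₂ y₂ x₁ = -1)
    (hm₃ : ∀ x₃ ∈ pm, ∀ y₃ ∈ pm, ∀ x₂ ∈ pm, m₃ x₃ y₃ x₂ = 1 ∨ m₃ x₃ y₃ x₂ = -1)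
    (hG : ∀ x₁ ∈ pm, ∀ y₁ ∈ pm, ∀ x₃ ∈ pm, ∀ u ∈ pm, ∀ v ∈ pm,
      G₁ x₁ y₁ x₃ u v = 1 ∨ G₁ x₁ y₁ x₃ u v = -1) :
    (1 / 64 : ℝ) * ∑ x₁ ∈ pm, ∑ x₂ ∈ pm, ∑ x₃ ∈ pm, ∑ y₁ ∈ pm, ∑ y₂ ∈ pm, ∑ y₃ ∈ pm,
        (if G₁ x₁ y₁ x₃ (m₂ x₂ y₂ x₁) (m₃ x₃ y₃ x₂) = y₁ * y₂ * y₃ * QG x₁ x₂ x₃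
          then (1 : ℝ) else 0) ≤ 7 / 8 := by
  classical
  have hι : ∀ b : Bool, ι b ∈ pm := by intro b; cases b <;> simp [ι]
  obtain ⟨B₂, hB₂⟩ : ∃ B : Bool → Bool → Bool → Bool,
      ∀ a b c, m₂ (ι a) (ι b) (ι c) = ι (B a b c) := by
    exact ⟨fun a b c => if m₂ (ι a) (ι b) (ι c) = 1 then true else false,
      fun a b c => pick _ (hm₂ _ (hι a) _ (hι b) _ (hι c))⟩
  obtain ⟨B₃, hB₃⟩ : ∃ B : Bool → Bool → Bool → Bool,
      ∀ a b c, m₃ (ι a) (ι b) (ι c) = ι (B a b c) := by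
    exact ⟨fun a b c => if m₃ (ι a) (ι b) (ι c) = 1 then true else false,
      fun a b c => pick _ (hm₃ _ (hι a) _ (hι b) _ (hι c))⟩
  obtain ⟨BG, hBG⟩ : ∃ B : Bool → Bool → Bool → Bool → Bool → Bool,
      ∀ a b c d e, G₁ (ι a) (ι b) (ι c) (ι d) (ι e) = ι (B a b c d e) := by
    exact ⟨fun a b c d e => if G₁ (ι a) (ι b) (ι c) (ι d) (ι e) = 1 then true else false,
      fun a b c d e => pick _ (hG _ (hι a) _ (hι b) _ (hι c) _ (hι d) _ (hι e))⟩
  have hQ : ∀ a₁ a₂ a₃ b₁ b₂ b₃ : Bool,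
      ι b₁ * ι b₂ * ι b₃ * QG (ι a₁) (ι a₂) (ι a₃) = ι (tb a₁ a₂ a₃ b₁ b₂ b₃) := by
    intro a₁ a₂ a₃ b₁ b₂ b₃
    cases a₁ <;> cases a₂ <;> cases a₃ <;> cases b₁ <;> cases b₂ <;> cases b₃ <;>
      norm_num [ι, tb, QG]
  have hιinj : ∀ u v : Bool, (ι u = ι v) ↔ u = v := by
    intro u v; cases u <;> cases v <;> norm_num [ι]
  have hsum : ∀ f : ℝ → ℝ, ∑ x ∈ pm, f x = ∑ b : Bool, f (ι b) := by
    intro f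
    rw [Fintype.sum_bool, show (pm) = insert (-1 : ℝ) {1} from rfl,
      Finset.sum_insert (by norm_num), Finset.sum_singleton]
    simp [ι]; ring
  simp only [hsum]
  have key : ∀ a₁ a₂ a₃ b₁ b₂ b₃ : Bool,
      (if G₁ (ι a₁) (ι b₁) (ι a₃) (m₂ (ι a₂) (ι b₂) (ι a₁)) (m₃ (ι a₃) (ι b₃) (ι a₂)) =
          ι b₁ * ι b₂ * ι b₃ * QG (ι a₁) (ι a₂) (ι a₃) then (1:ℝ) else 0) =
      (if BG a₁ b₁ a₃ (B₂ a₂ b₂ a₁) (B₃ a₃ b₃ a₂) = tb a₁ a₂ a₃ b₁ b₂ b₃ then (1:ℝ) else 0) := by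
    intro a₁ a₂ a₃ b₁ b₂ b₃
    simp only [hB₂, hB₃, hBG, hQ, hιinj]
  simp only [key]
  have hcast : (∑ a₁ : Bool, ∑ a₂ : Bool, ∑ a₃ : Bool, ∑ b₁ : Bool, ∑ b₂ : Bool, ∑ b₃ : Bool,
      (if BG a₁ b₁ a₃ (B₂ a₂ b₂ a₁) (B₃ a₃ b₃ a₂) = tb a₁ a₂ a₃ b₁ b₂ b₃ then (1:ℝ) else 0)) =
      ((∑ a₁ : Bool, ∑ a₂ : Bool, ∑ a₃ : Bool, ∑ b₁ : Bool, ∑ b₂ : Bool, ∑ b₃ : Bool,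
      (if BG a₁ b₁ a₃ (B₂ a₂ b₂ a₁) (B₃ a₃ b₃ a₂) = tb a₁ a₂ a₃ b₁ b₂ b₃ then (1:ℕ) else 0) : ℕ) : ℝ) := by
    push_cast
    rfl
  rw [hcast]
  have hN := main BG B₂ B₃
  have : ((∑ a₁ : Bool, ∑ a₂ : Bool, ∑ a₃ : Bool, ∑ b₁ : Bool, ∑ b₂ : Bool, ∑ b₃ : Bool,
      (if BG a₁ b₁ a₃ (B₂ a₂ b₂ a₁) (B₃ a₃ b₃ a₂) = tb a₁ a₂ a₃ b₁ b₂ b₃ then (1:ℕ) else 0) : ℕ) : ℝ) ≤ 56 := by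
    exact_mod_cast hN
  linarith
end

section
/- Let Q : {-1,1}ⁿ → ℝ be nonvanishing, Γ = Σₓ |Q(x)|, and q(x) = |Q(x)|/Γ. Suppose the parties share outcome random variables whose conditional distributions achieve full correlators Eₓ with Σₓ Q(x)Eₓ = B. If in the communication protocol each party broadcasts mᵢ = yᵢaᵢ and guesses G = ∏ᵢ mᵢ, then the probability (over x ∼ q, y uniform, and the outcome randomness) that G equals f(x,y) = y₁⋯yₙ S[Q(x)] is exactly 1/2 + B/(2Γ). -/
noncomputable def cube (n : ℕ) : Finset (Fin n → ℝ) :=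
  Fintype.piFinset fun _ => ({-1, 1} : Finset ℝ)

lemma mem_cube {n : ℕ} {x : Fin n → ℝ} : x ∈ cube n ↔ ∀ i, x i = -1 ∨ x i = 1 := by
  simp [cube, Fintype.mem_piFinset]

lemma prod_pm {n : ℕ} {x : Fin n → ℝ} (hx : ∀ i, x i = -1 ∨ x i = 1) :
    (∏ i, x i) = -1 ∨ (∏ i, x i) = 1 := by
  refine Finset.prod_induction x (fun u => u = -1 ∨ u = 1) ?_ (Or.inr rfl)
    (fun i _ => hx i)
  rintro a b (ha | ha) (hb | hb) <;> rw [ha, hb] <;> norm_num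

lemma cube_card {n : ℕ} : (cube n).card = 2 ^ n := by
  have : ({-1, 1} : Finset ℝ).card = 2 := by norm_num
  simp [cube, Fintype.card_piFinset, this]

theorem stmt_14 (n : ℕ) (Q : (Fin n → ℝ) → ℝ) (P : (Fin n → ℝ) → (Fin n → ℝ) → ℝ) (B Γ : ℝ)
    (hQ : ∀ x ∈ cube n, Q x ≠ 0)
    (hΓ : Γ = ∑ x ∈ cube n, |Q x|)
    (hPnn : ∀ x ∈ cube n, ∀ a ∈ cube n, 0 ≤ P x a)
    (hP1 : ∀ x ∈ cube n, ∑ a ∈ cube n, P x a = 1)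
    (hB : ∑ x ∈ cube n, Q x * ∑ a ∈ cube n, P x a * ∏ i, a i = B) :
    ∑ x ∈ cube n, ∑ y ∈ cube n, ∑ a ∈ cube n,
        (|Q x| / Γ) * (1 / 2 ^ n) * P x a *
          (if (∏ i, y i * a i) = (∏ i, y i) * Real.sign (Q x) then (1 : ℝ) else 0) =
      1 / 2 + B / (2 * Γ) := by
  classical
  have hcube_ne : (cube n).Nonempty := ⟨fun _ => 1, by simp [mem_cube]⟩
  have hΓpos : 0 < Γ := hΓ ▸ Finset.sum_pos (fun x hx => abs_pos.mpr (hQ x hx)) hcube_ne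
  have hΓne : Γ ≠ 0 := ne_of_gt hΓpos
  have hsign : ∀ x ∈ cube n, Real.sign (Q x) = -1 ∨ Real.sign (Q x) = 1 := by
    intro x hx
    rcases lt_or_gt_of_ne (hQ x hx) with h | h
    · exact Or.inl (Real.sign_of_neg h)
    · exact Or.inr (Real.sign_of_pos h)
  have key : ∀ x ∈ cube n, ∀ y ∈ cube n, ∀ a ∈ cube n,
      (if (∏ i, y i * a i) = (∏ i, y i) * Real.sign (Q x) then (1 : ℝ) else 0)
        = (1 + Real.sign (Q x) * ∏ i, a i) / 2 := by
    intro x hx y hy a ha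
    have hy' := prod_pm (mem_cube.mp hy)
    have ha' := prod_pm (mem_cube.mp ha)
    have hyne : (∏ i, y i) ≠ 0 := by rcases hy' with h | h <;> rw [h] <;> norm_num
    rw [Finset.prod_mul_distrib]
    have hcond : ((∏ i, y i) * ∏ i, a i) = (∏ i, y i) * Real.sign (Q x) ↔
        (∏ i, a i) = Real.sign (Q x) := mul_right_inj' hyne
    rw [if_congr hcond rfl rfl]
    rcases ha' with h | h <;> rcases hsign x hx with h2 | h2 <;> rw [h, h2] <;> norm_num
  have step1 : ∀ x ∈ cube n, (∑ y ∈ cube n, ∑ a ∈ cube n,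
      (|Q x| / Γ) * (1 / 2 ^ n) * P x a *
        (if (∏ i, y i * a i) = (∏ i, y i) * Real.sign (Q x) then (1 : ℝ) else 0))
      = |Q x| / (2 * Γ) + (Q x / (2 * Γ)) * ∑ a ∈ cube n, P x a * ∏ i, a i := by
    intro x hx
    have h1 : (∑ y ∈ cube n, ∑ a ∈ cube n,
        (|Q x| / Γ) * (1 / 2 ^ n) * P x a *
          (if (∏ i, y i * a i) = (∏ i, y i) * Real.sign (Q x) then (1 : ℝ) else 0))
        = ∑ y ∈ cube n, ∑ a ∈ cube n,
          (|Q x| / Γ) * (1 / 2 ^ n) * P x a * ((1 + Real.sign (Q x) * ∏ i, a i) / 2) := by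
      refine Finset.sum_congr rfl fun y hy => Finset.sum_congr rfl fun a ha => ?_
      rw [key x hx y hy a ha]
    rw [h1, Finset.sum_const, cube_card, nsmul_eq_mul]
    have h2n : ((2 : ℝ) ^ n) ≠ 0 := by positivity
    have h2 : ((2 ^ n : ℕ) : ℝ) * (∑ a ∈ cube n,
        (|Q x| / Γ) * (1 / 2 ^ n) * P x a * ((1 + Real.sign (Q x) * ∏ i, a i) / 2))
        = ∑ a ∈ cube n, (|Q x| / (2 * Γ) * P x a
            + (Real.sign (Q x) * |Q x|) / (2 * Γ) * (P x a * ∏ i, a i)) := by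
      rw [Finset.mul_sum]
      refine Finset.sum_congr rfl fun a ha => ?_
      push_cast
      field_simp
    have hsx : Real.sign (Q x) * |Q x| = Q x := by
      rcases lt_or_gt_of_ne (hQ x hx) with h | h
      · rw [Real.sign_of_neg h, abs_of_neg h]; ring
      · rw [Real.sign_of_pos h, abs_of_pos h]; ring
    rw [h2, Finset.sum_add_distrib, ← Finset.mul_sum, ← Finset.mul_sum, hP1 x hx, mul_one, hsx]
  rw [Finset.sum_congr rfl step1, Finset.sum_add_distrib]
  have e1 : ∑ x ∈ cube n, |Q x| / (2 * Γ) = 1 / 2 := by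
    rw [← Finset.sum_div, ← hΓ]
    field_simp
  have e2 : ∑ x ∈ cube n, (Q x / (2 * Γ)) * ∑ a ∈ cube n, P x a * ∏ i, a i
      = B / (2 * Γ) := by
    rw [← hB, Finset.sum_div]
    refine Finset.sum_congr rfl fun x hx => ?_
    ring
  rw [e1, e2]
end

section
/- The maximum over all functions a, b, c : {-1,1}² → {-1,1} of Σ_{x₁,x₂,x₃ ∈ {-1,1}} Q_G(x₁,x₂,x₃) a(x₁,x₃) b(x₁,x₂) c(x₂,x₃), with Q_G(x) = 1 - (1-x₁)(1-x₂)(1-x₃)/4, equals 6; in particular it is strictly less than 8 = Σₓ |Q_G(x)|. -/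
private lemma pm_mul {x y : ℝ} (hx : x = 1 ∨ x = -1) (hy : y = 1 ∨ y = -1) :
    x * y = 1 ∨ x * y = -1 := by rcases hx with rfl | rfl <;> rcases hy with rfl | rfl <;> norm_num

private lemma pm_neg {x : ℝ} (hx : x = 1 ∨ x = -1) : -x = 1 ∨ -x = -1 := by
  rcases hx with rfl | rfl <;> norm_num

private lemma pm_sq {x : ℝ} (hx : x = 1 ∨ x = -1) : x ^ 2 = 1 := by
  rcases hx with rfl | rfl <;> norm_num

private lemma key_s17 (t1 t2 t3 t4 t5 t6 t7 t8 : ℝ)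
    (h1 : t1 = 1 ∨ t1 = -1) (h2 : t2 = 1 ∨ t2 = -1) (h3 : t3 = 1 ∨ t3 = -1)
    (h4 : t4 = 1 ∨ t4 = -1) (h5 : t5 = 1 ∨ t5 = -1) (h6 : t6 = 1 ∨ t6 = -1)
    (h7 : t7 = 1 ∨ t7 = -1) (h8 : t8 = 1 ∨ t8 = -1)
    (hp : t1 * t2 * t3 * t4 * t5 * t6 * t7 * t8 = -1) :
    t1 + t2 + t3 + t4 + t5 + t6 + t7 + t8 ≤ 6 := by
  rcases h1 with rfl | rfl <;> rcases h2 with rfl | rfl <;> rcases h3 with rfl | rfl <;>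
    rcases h4 with rfl | rfl <;> rcases h5 with rfl | rfl <;> rcases h6 with rfl | rfl <;>
    rcases h7 with rfl | rfl <;> rcases h8 with rfl | rfl <;>
    revert hp <;> norm_num

theorem stmt_17 :
    (∀ a b c : ℝ → ℝ → ℝ,
      (∀ u ∈ pm, ∀ v ∈ pm, a u v = 1 ∨ a u v = -1) →
      (∀ u ∈ pm, ∀ v ∈ pm, b u v = 1 ∨ b u v = -1) →
      (∀ u ∈ pm, ∀ v ∈ pm, c u v = 1 ∨ c u v = -1) →
      ∑ x₁ ∈ pm, ∑ x₂ ∈ pm, ∑ x₃ ∈ pm,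
        QG x₁ x₂ x₃ * a x₁ x₃ * b x₁ x₂ * c x₂ x₃ ≤ 6) ∧
    (∃ a b c : ℝ → ℝ → ℝ,
      (∀ u ∈ pm, ∀ v ∈ pm, a u v = 1 ∨ a u v = -1) ∧
      (∀ u ∈ pm, ∀ v ∈ pm, b u v = 1 ∨ b u v = -1) ∧
      (∀ u ∈ pm, ∀ v ∈ pm, c u v = 1 ∨ c u v = -1) ∧
      ∑ x₁ ∈ pm, ∑ x₂ ∈ pm, ∑ x₃ ∈ pm,
        QG x₁ x₂ x₃ * a x₁ x₃ * b x₁ x₂ * c x₂ x₃ = 6) ∧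
    (6 : ℝ) < ∑ x₁ ∈ pm, ∑ x₂ ∈ pm, ∑ x₃ ∈ pm, |QG x₁ x₂ x₃| := by
  have hne : (-1 : ℝ) ≠ 1 := by norm_num
  have hm1 : (-1 : ℝ) ∈ pm := by simp
  have hp1 : (1 : ℝ) ∈ pm := by simp
  refine ⟨?_, ?_, ?_⟩
  · intro a b c ha hb hc
    have hA1 := ha _ hm1 _ hm1
    have hA2 := ha _ hm1 _ hp1
    have hA3 := ha _ hp1 _ hm1
    have hA4 := ha _ hp1 _ hp1
    have hB1 := hb _ hm1 _ hm1
    have hB2 := hb _ hm1 _ hp1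
    have hB3 := hb _ hp1 _ hm1
    have hB4 := hb _ hp1 _ hp1
    have hC1 := hc _ hm1 _ hm1
    have hC2 := hc _ hm1 _ hp1
    have hC3 := hc _ hp1 _ hm1
    have hC4 := hc _ hp1 _ hp1
    simp only [Finset.sum_pair hne, QG]
    have t1 := pm_neg (pm_mul (pm_mul hA1 hB1) hC1)
    have t2 := pm_mul (pm_mul hA2 hB1) hC2
    have t3 := pm_mul (pm_mul hA1 hB2) hC3
    have t4 := pm_mul (pm_mul hA2 hB2) hC4
    have t5 := pm_mul (pm_mul hA3 hB3) hC1
    have t6 := pm_mul (pm_mul hA4 hB3) hC2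
    have t7 := pm_mul (pm_mul hA3 hB4) hC3
    have t8 := pm_mul (pm_mul hA4 hB4) hC4
    have hp : (-(a (-1) (-1) * b (-1) (-1) * c (-1) (-1))) *
        (a (-1) 1 * b (-1) (-1) * c (-1) 1) *
        (a (-1) (-1) * b (-1) 1 * c 1 (-1)) *
        (a (-1) 1 * b (-1) 1 * c 1 1) *
        (a 1 (-1) * b 1 (-1) * c (-1) (-1)) *
        (a 1 1 * b 1 (-1) * c (-1) 1) *
        (a 1 (-1) * b 1 1 * c 1 (-1)) *
        (a 1 1 * b 1 1 * c 1 1) = -1 := by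
      have : (-(a (-1) (-1) * b (-1) (-1) * c (-1) (-1))) *
          (a (-1) 1 * b (-1) (-1) * c (-1) 1) *
          (a (-1) (-1) * b (-1) 1 * c 1 (-1)) *
          (a (-1) 1 * b (-1) 1 * c 1 1) *
          (a 1 (-1) * b 1 (-1) * c (-1) (-1)) *
          (a 1 1 * b 1 (-1) * c (-1) 1) *
          (a 1 (-1) * b 1 1 * c 1 (-1)) *
          (a 1 1 * b 1 1 * c 1 1)
          = -((a (-1) (-1)) ^ 2 * (a (-1) 1) ^ 2 * (a 1 (-1)) ^ 2 * (a 1 1) ^ 2 *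
              (b (-1) (-1)) ^ 2 * (b (-1) 1) ^ 2 * (b 1 (-1)) ^ 2 * (b 1 1) ^ 2 *
              (c (-1) (-1)) ^ 2 * (c (-1) 1) ^ 2 * (c 1 (-1)) ^ 2 * (c 1 1) ^ 2) := by
        ring
      rw [this, pm_sq hA1, pm_sq hA2, pm_sq hA3, pm_sq hA4, pm_sq hB1, pm_sq hB2,
        pm_sq hB3, pm_sq hB4, pm_sq hC1, pm_sq hC2, pm_sq hC3, pm_sq hC4]
      norm_num
    have := key_s17 _ _ _ _ _ _ _ _ t1 t2 t3 t4 t5 t6 t7 t8 hp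
    nlinarith [this]
  · refine ⟨fun _ _ => 1, fun _ _ => 1, fun _ _ => 1, ?_, ?_, ?_, ?_⟩ <;>
      simp [Finset.sum_pair hne, QG] <;> norm_num
  · simp only [Finset.sum_pair hne, QG]
    norm_num
end
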